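/- Let a, b, c, d ∈ ℂ, let f : {0,1}² → ℂ be the binary signature with f(0,0) = a, f(0,1) = b, f(1,0) = c, f(1,1) = d, and let g : {0,1}³ → ℂ be g = [a,b]^{⊗3} + [c,d]^{⊗3}, i.e., g(x₁,x₂,x₃) = ∏ᵢ [a,b](xᵢ) + ∏ᵢ [c,d](xᵢ) where [a,b](0) = a and [a,b](1) = b. Then f is of product type if and only if g is of product type. -/

import Mathlib

/-- `h` is in `ℰ`: its support is contained in a pair of antipodal points
`{α, ᾱ}` (over `ℤ₂`, the complement `ᾱ` is `α + 1`). -/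
def InE {ι : Type*} (h : (ι → ZMod 2) → ℂ) : Prop :=
  ∃ α : ι → ZMod 2, ∀ x, h x ≠ 0 → x = α ∨ x = α + 1

/-- `f` is of product type (`f ∈ 𝒫`): it factors over a partition of its
variables into signatures from `ℰ`. -/
def IsProductType {ι : Type*} [Fintype ι] [DecidableEq ι]
    (f : (ι → ZMod 2) → ℂ) : Prop :=
  ∃ (k : ℕ) (I : Fin k → Finset ι)
    (g : (j : Fin k) → ({i // i ∈ I j} → ZMod 2) → ℂ),
    (∀ j, (I j).Nonempty) ∧
    (∀ j j', j ≠ j' → Disjoint (I j) (I j')) ∧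
    (∀ i : ι, ∃ j, i ∈ I j) ∧
    (∀ j, InE (g j)) ∧
    ∀ x : ι → ZMod 2, f x = ∏ j, g j (fun i => x i.1)


private lemma zmod2_cases (z : ZMod 2) : z = 0 ∨ z = 1 := by revert z; decide

private lemma prodType_of_InE {ι : Type*} [Fintype ι] [DecidableEq ι] [Nonempty ι]
    {f : (ι → ZMod 2) → ℂ} (h : InE f) : IsProductType f := by
  obtain ⟨α, hα⟩ := h
  refine ⟨1, fun _ => Finset.univ, fun _ y => f (fun i => y ⟨i, Finset.mem_univ i⟩),
    fun _ => Finset.univ_nonempty, fun j j' hjj' => absurd (Subsingleton.elim j j') hjj',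
    fun i => ⟨0, Finset.mem_univ i⟩, ?_, ?_⟩
  · intro j
    refine ⟨fun i => α i.1, fun y hy => ?_⟩
    rcases hα _ hy with h | h
    · exact Or.inl (funext fun i => by simpa using congrFun h i.1)
    · exact Or.inr (funext fun i => by simpa [Pi.add_apply] using congrFun h i.1)
  · intro x
    rw [Fin.prod_univ_one]

private lemma prodType_of_units {n : ℕ} {f : (Fin n → ZMod 2) → ℂ} (u : Fin n → ZMod 2 → ℂ)
    (h : ∀ x, f x = ∏ i, u i (x i)) : IsProductType f := by
  refine ⟨n, fun j => {j}, fun j y => u j (y ⟨j, Finset.mem_singleton_self j⟩),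
    fun j => ⟨j, Finset.mem_singleton_self j⟩,
    fun j j' hjj' => by simp [Finset.disjoint_singleton]; exact fun hq => hjj' hq,
    fun i => ⟨i, Finset.mem_singleton_self i⟩, ?_, fun x => h x⟩
  intro j
  refine ⟨fun _ => 0, fun y _ => ?_⟩
  have hs : ∀ i' : {i // i ∈ ({j} : Finset (Fin n))}, i' = ⟨j, Finset.mem_singleton_self j⟩ :=
    fun i' => Subtype.ext (Finset.mem_singleton.mp i'.2)
  rcases zmod2_cases (y ⟨j, Finset.mem_singleton_self j⟩) with h0 | h1
  · exact Or.inl (funext fun i' => by rw [hs i']; exact h0)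
  · exact Or.inr (funext fun i' => by rw [hs i']; simpa using h1)

private lemma slice_of_singleton {ι : Type*} [Fintype ι] [DecidableEq ι]
    {k : ℕ} {I : Fin k → Finset ι} {gg : (j : Fin k) → ({i // i ∈ I j} → ZMod 2) → ℂ}
    {f : (ι → ZMod 2) → ℂ}
    (hdisj : ∀ j j', j ≠ j' → Disjoint (I j) (I j'))
    (hprod : ∀ x, f x = ∏ j, gg j (fun i => x i.1))
    (j : Fin k) (i : ι) (hji : I j = {i}) :
    ∃ u : ZMod 2 → ℂ, ∃ R : (ι → ZMod 2) → ℂ,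
      (∀ x, f x = u (x i) * R x) ∧ ∀ x v, R (Function.update x i v) = R x := by
  refine ⟨fun v => gg j (fun _ => v),
    fun x => ∏ j' ∈ Finset.univ.erase j, gg j' (fun i' => x i'.1), fun x => ?_, fun x v => ?_⟩
  · rw [hprod x, ← Finset.mul_prod_erase Finset.univ _ (Finset.mem_univ j)]
    have h1 : (fun i' : {i' // i' ∈ I j} => x i'.1) = (fun _ => x i) := by
      funext i'
      have hi : i'.1 = i := Finset.mem_singleton.mp (hji ▸ i'.2)
      rw [hi]
    rw [h1]
  · refine Finset.prod_congr rfl fun j' hj' => ?_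
    congr 1
    funext i'
    have hne : i'.1 ≠ i := by
      intro hEq
      have hj'j : j' ≠ j := (Finset.mem_erase.mp hj').1
      have hmem : i'.1 ∈ I j := by rw [hji, hEq]; exact Finset.mem_singleton_self i
      exact (Finset.disjoint_left.mp (hdisj j' j hj'j) i'.2) hmem
    rw [Function.update_of_ne hne]

private lemma support_of_univ_block {ι : Type*} [Fintype ι] [DecidableEq ι]
    {k : ℕ} {I : Fin k → Finset ι} {gg : (j : Fin k) → ({i // i ∈ I j} → ZMod 2) → ℂ}
    {f : (ι → ZMod 2) → ℂ}
    (hE : ∀ j, InE (gg j))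
    (hprod : ∀ x, f x = ∏ j, gg j (fun i => x i.1))
    (j : Fin k) (hj : I j = Finset.univ) : InE f := by
  obtain ⟨α, hα⟩ := hE j
  refine ⟨fun i => α ⟨i, by rw [hj]; exact Finset.mem_univ i⟩, fun x hx => ?_⟩
  have hne : gg j (fun i' => x i'.1) ≠ 0 := by
    intro h0
    exact hx (by rw [hprod x]; exact Finset.prod_eq_zero (Finset.mem_univ j) h0)
  rcases hα _ hne with h | h
  · exact Or.inl (funext fun i => congrFun h ⟨i, by rw [hj]; exact Finset.mem_univ i⟩)
  · exact Or.inr (funext fun i => congrFun h ⟨i, by rw [hj]; exact Finset.mem_univ i⟩)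

private lemma block_eq_singleton {ι : Type*} [Fintype ι] [DecidableEq ι]
    {k : ℕ} {I : Fin k → Finset ι}
    (hdisj : ∀ j j', j ≠ j' → Disjoint (I j) (I j'))
    (jm : Fin k) (i : ι) (hi : i ∈ I jm)
    (hothers : ∀ i' : ι, i' ≠ i → ∃ j', i' ∈ I j' ∧ j' ≠ jm) : I jm = {i} := by
  apply Finset.ext; intro x
  simp only [Finset.mem_singleton]
  constructor
  · intro hx
    by_contra hne
    obtain ⟨j', hj'm, hj'ne⟩ := hothers x hne
    exact (Finset.disjoint_left.mp (hdisj _ _ hj'ne) hj'm) hx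
  · rintro rfl; exact hi

private lemma fin3_structure {k : ℕ} {I : Fin k → Finset (Fin 3)}
    (hdisj : ∀ j j', j ≠ j' → Disjoint (I j) (I j'))
    (hcov : ∀ i, ∃ j, i ∈ I j) :
    (∃ j, I j = Finset.univ) ∨ ∃ j i, I j = {i} := by
  obtain ⟨j0, hj0⟩ := hcov 0
  obtain ⟨j1, hj1⟩ := hcov 1
  obtain ⟨j2, hj2⟩ := hcov 2
  by_cases e01 : j0 = j1
  · by_cases e02 : j0 = j2
    · left
      refine ⟨j0, Finset.eq_univ_iff_forall.mpr fun x => ?_⟩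
      fin_cases x
      · exact hj0
      · rw [e01]; exact hj1
      · rw [e02]; exact hj2
    · right
      refine ⟨j2, 2, block_eq_singleton hdisj j2 2 hj2 fun i' hne => ?_⟩
      fin_cases i'
      · exact ⟨j0, hj0, e02⟩
      · exact ⟨j1, hj1, fun h => e02 (e01.trans h)⟩
      · exact absurd rfl hne
  · by_cases e12 : j1 = j2
    · right
      refine ⟨j0, 0, block_eq_singleton hdisj j0 0 hj0 fun i' hne => ?_⟩
      fin_cases i'
      · exact absurd rfl hne
      · exact ⟨j1, hj1, fun h => e01 h.symm⟩
      · exact ⟨j2, hj2, fun h => e01 (h.symm.trans e12.symm)⟩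
    · right
      refine ⟨j1, 1, block_eq_singleton hdisj j1 1 hj1 fun i' hne => ?_⟩
      fin_cases i'
      · exact ⟨j0, hj0, e01⟩
      · exact absurd rfl hne
      · exact ⟨j2, hj2, fun h => e12 h.symm⟩

private lemma fin2_structure {k : ℕ} {I : Fin k → Finset (Fin 2)}
    (hdisj : ∀ j j', j ≠ j' → Disjoint (I j) (I j'))
    (hcov : ∀ i, ∃ j, i ∈ I j) :
    (∃ j, I j = Finset.univ) ∨ ∃ j, I j = {0} := by
  obtain ⟨j0, hj0⟩ := hcov 0
  obtain ⟨j1, hj1⟩ := hcov 1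
  by_cases e01 : j0 = j1
  · left
    refine ⟨j0, Finset.eq_univ_iff_forall.mpr fun x => ?_⟩
    fin_cases x
    · exact hj0
    · rw [e01]; exact hj1
  · right
    refine ⟨j0, block_eq_singleton hdisj j0 0 hj0 fun i' hne => ?_⟩
    fin_cases i'
    · exact absurd rfl hne
    · exact ⟨j1, hj1, fun h => e01 h.symm⟩

private lemma algC {a b c d : ℂ} (h1 : a^2*b + c^2*d = 0) (h2 : a*b^2 + c*d^2 = 0) :
    a*d = b*c ∨ (b = 0 ∧ c = 0) ∨ (a = 0 ∧ d = 0) := by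
  by_cases had : a*d = b*c
  · exact Or.inl had
  have hab : a*b = 0 := by
    have h3 : a*b*(a*d - b*c) = 0 := by linear_combination d*h1 - c*h2
    rcases mul_eq_zero.mp h3 with h | h
    · exact h
    · exact absurd (sub_eq_zero.mp h) had
  have hcd : c*d = 0 := by
    have h3 : c*d*(a*d - b*c) = 0 := by linear_combination a*h2 - b*h1
    rcases mul_eq_zero.mp h3 with h | h
    · exact h
    · exact absurd (sub_eq_zero.mp h) had
  rcases mul_eq_zero.mp hab with ha | hb
  · rcases mul_eq_zero.mp hcd with hc | hd
    · exact absurd (by rw [ha, hc]; ring) had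
    · exact Or.inr (Or.inr ⟨ha, hd⟩)
  · rcases mul_eq_zero.mp hcd with hc | hd
    · exact Or.inr (Or.inl ⟨hb, hc⟩)
    · exact absurd (by rw [hb, hd]; ring) had

private lemma alg {a b c d u0 u1 : ℂ}
    (h0 : u1*(a^3+c^3) = u0*(a^2*b+c^2*d))
    (h1 : u1*(a^2*b+c^2*d) = u0*(a*b^2+c*d^2))
    (h2 : u1*(a*b^2+c*d^2) = u0*(b^3+d^3))
    (hz1 : u0 = 0 → u1 = 0 → a^2*b + c^2*d = 0)
    (hz2 : u0 = 0 → u1 = 0 → a*b^2 + c*d^2 = 0) :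
    a*d = b*c ∨ (b = 0 ∧ c = 0) ∨ (a = 0 ∧ d = 0) := by
  by_cases hu0 : u0 = 0
  · by_cases hu1 : u1 = 0
    · exact algC (hz1 hu0 hu1) (hz2 hu0 hu1)
    · subst hu0
      have e1 : a^2*b + c^2*d = 0 := by
        rcases mul_eq_zero.mp (by linear_combination h1 : u1*(a^2*b+c^2*d) = 0) with h | h
        · exact absurd h hu1
        · exact h
      have e2 : a*b^2 + c*d^2 = 0 := by
        rcases mul_eq_zero.mp (by linear_combination h2 : u1*(a*b^2+c*d^2) = 0) with h | h
        · exact absurd h hu1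
        · exact h
      exact algC e1 e2
  · by_cases hu1 : u1 = 0
    · subst hu1
      have e1 : a^2*b + c^2*d = 0 := by
        rcases mul_eq_zero.mp (by linear_combination -h0 : u0*(a^2*b+c^2*d) = 0) with h | h
        · exact absurd h hu0
        · exact h
      have e2 : a*b^2 + c*d^2 = 0 := by
        rcases mul_eq_zero.mp (by linear_combination -h1 : u0*(a*b^2+c*d^2) = 0) with h | h
        · exact absurd h hu0
        · exact h
      exact algC e1 e2
    · have k0 : (u1*a - u0*b)*a^2 + (u1*c - u0*d)*c^2 = 0 := by linear_combination h0
      have k1 : (u1*a - u0*b)*(a*b) + (u1*c - u0*d)*(c*d) = 0 := by linear_combination h1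
      have k2 : (u1*a - u0*b)*b^2 + (u1*c - u0*d)*d^2 = 0 := by linear_combination h2
      by_cases hL : u1*a - u0*b = 0
      · by_cases hM : u1*c - u0*d = 0
        · left
          have h3 : u0*u1*(a*d - b*c) = 0 := by linear_combination (u0*d)*hL - (u0*b)*hM
          rcases mul_eq_zero.mp h3 with h | h
          · rcases mul_eq_zero.mp h with h' | h'
            · exact absurd h' hu0
            · exact absurd h' hu1
          · exact sub_eq_zero.mp h
        · have hc2 : (u1*c - u0*d)*c^2 = 0 := by linear_combination k0 - a^2*hL
          have hd2 : (u1*c - u0*d)*d^2 = 0 := by linear_combination k2 - b^2*hL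
          have hc : c = 0 := by
            rcases mul_eq_zero.mp hc2 with h | h
            · exact absurd h hM
            · exact pow_eq_zero_iff (by norm_num) |>.mp h
          have hd : d = 0 := by
            rcases mul_eq_zero.mp hd2 with h | h
            · exact absurd h hM
            · exact pow_eq_zero_iff (by norm_num) |>.mp h
          left; rw [hc, hd]; ring
      · have q1 : (u1*a - u0*b)*(a^2*d^2 - b^2*c^2) = 0 := by linear_combination d^2*k0 - c^2*k2
        have q2 : (u1*a - u0*b)*(a*b*c*d - b^2*c^2) = 0 := by linear_combination (c*d)*k1 - c^2*k2
        have e1 : a^2*d^2 - b^2*c^2 = 0 := (mul_eq_zero.mp q1).resolve_left hL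
        have e2 : a*b*c*d - b^2*c^2 = 0 := (mul_eq_zero.mp q2).resolve_left hL
        have q3 : a*d*(a*d - b*c) = 0 := by linear_combination e1 - e2
        left
        rcases mul_eq_zero.mp q3 with h | h
        · have hbc2 : (b*c)^2 = 0 := by linear_combination (a*d)*h - e1
          have hbc : b*c = 0 := pow_eq_zero_iff (by norm_num) |>.mp hbc2
          rw [h, hbc]
        · exact sub_eq_zero.mp h
private lemma g_to_P {a b c d : ℂ} {g : (Fin 3 → ZMod 2) → ℂ}
    (hg : ∀ x, g x = (∏ i, if x i = 0 then a else b) +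
                     (∏ i, if x i = 0 then c else d))
    (hpt : IsProductType g) :
    a*d = b*c ∨ (b = 0 ∧ c = 0) ∨ (a = 0 ∧ d = 0) := by
  obtain ⟨k, I, gg, hne, hdisj, hcov, hE, hprod⟩ := hpt
  have v001 : g ![0,0,1] = a^2*b + c^2*d := by rw [hg]; simp [Fin.prod_univ_three]; ring
  have v010 : g ![0,1,0] = a^2*b + c^2*d := by rw [hg]; simp [Fin.prod_univ_three]; ring
  have v100 : g ![1,0,0] = a^2*b + c^2*d := by rw [hg]; simp [Fin.prod_univ_three]; ring
  have v011 : g ![0,1,1] = a*b^2 + c*d^2 := by rw [hg]; simp [Fin.prod_univ_three]; ring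
  have v101 : g ![1,0,1] = a*b^2 + c*d^2 := by rw [hg]; simp [Fin.prod_univ_three]; ring
  have v110 : g ![1,1,0] = a*b^2 + c*d^2 := by rw [hg]; simp [Fin.prod_univ_three]; ring
  rcases fin3_structure hdisj hcov with ⟨j, hj⟩ | ⟨j, i, hj⟩
  · obtain ⟨α, hα⟩ := support_of_univ_block hE hprod j hj
    have he1 : a^2*b + c^2*d = 0 := by
      by_contra hne1
      have n1 := hα ![0,0,1] (by rw [v001]; exact hne1)
      have n2 := hα ![0,1,0] (by rw [v010]; exact hne1)
      have n3 := hα ![1,0,0] (by rw [v100]; exact hne1)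
      rcases n1 with h1 | h1 <;> rcases n2 with h2 | h2 <;> rcases n3 with h3 | h3
      · exact absurd (h1.trans h2.symm) (by decide)
      · exact absurd (h1.trans h2.symm) (by decide)
      · exact absurd (h1.trans h3.symm) (by decide)
      · exact absurd (h2.trans h3.symm) (by decide)
      · exact absurd (h2.trans h3.symm) (by decide)
      · exact absurd (h1.trans h3.symm) (by decide)
      · exact absurd (h1.trans h2.symm) (by decide)
      · exact absurd (h1.trans h2.symm) (by decide)
    have he2 : a*b^2 + c*d^2 = 0 := by
      by_contra hne2
      have n1 := hα ![0,1,1] (by rw [v011]; exact hne2)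
      have n2 := hα ![1,0,1] (by rw [v101]; exact hne2)
      have n3 := hα ![1,1,0] (by rw [v110]; exact hne2)
      rcases n1 with h1 | h1 <;> rcases n2 with h2 | h2 <;> rcases n3 with h3 | h3
      · exact absurd (h1.trans h2.symm) (by decide)
      · exact absurd (h1.trans h2.symm) (by decide)
      · exact absurd (h1.trans h3.symm) (by decide)
      · exact absurd (h2.trans h3.symm) (by decide)
      · exact absurd (h2.trans h3.symm) (by decide)
      · exact absurd (h1.trans h3.symm) (by decide)
      · exact absurd (h1.trans h2.symm) (by decide)
      · exact absurd (h1.trans h2.symm) (by decide)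
    exact algC he1 he2
  · obtain ⟨u, R, hf, hR⟩ := slice_of_singleton hdisj hprod j i hj
    have key : ∀ x y : Fin 3 → ZMod 2, x i = 0 → y i = 1 → (∀ i', i' ≠ i → x i' = y i') →
        u 1 * g x = u 0 * g y := by
      intro x y hx hy hxy
      have hyx : y = Function.update x i 1 := by
        funext i'
        by_cases h : i' = i
        · subst h; rw [Function.update_self]; exact hy
        · rw [Function.update_of_ne h]; exact (hxy i' h).symm
      rw [hf x, hf y, hx, hy, hyx, hR]
      ring
    have hz1 : u 0 = 0 → u 1 = 0 → a^2*b + c^2*d = 0 := by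
      intro h0 h1
      rw [← v001, hf]
      rcases zmod2_cases (![0,0,1] i) with h | h <;> rw [h] <;>
        first
        | (rw [h0]; ring)
        | (rw [h1]; ring)
    have hz2 : u 0 = 0 → u 1 = 0 → a*b^2 + c*d^2 = 0 := by
      intro h0 h1
      rw [← v011, hf]
      rcases zmod2_cases (![0,1,1] i) with h | h <;> rw [h] <;>
        first
        | (rw [h0]; ring)
        | (rw [h1]; ring)
    fin_cases i
    · have k0 := key ![0,0,0] ![1,0,0] (by decide) (by decide) (by decide)
      have k1 := key ![0,0,1] ![1,0,1] (by decide) (by decide) (by decide)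
      have k2 := key ![0,1,1] ![1,1,1] (by decide) (by decide) (by decide)
      simp only [hg, Fin.prod_univ_three] at k0 k1 k2
      simp at k0 k1 k2
      exact alg (by linear_combination k0) (by linear_combination k1) (by linear_combination k2) hz1 hz2
    · have k0 := key ![0,0,0] ![0,1,0] (by decide) (by decide) (by decide)
      have k1 := key ![0,0,1] ![0,1,1] (by decide) (by decide) (by decide)
      have k2 := key ![1,0,1] ![1,1,1] (by decide) (by decide) (by decide)
      simp only [hg, Fin.prod_univ_three] at k0 k1 k2
      simp at k0 k1 k2
      exact alg (by linear_combination k0) (by linear_combination k1) (by linear_combination k2) hz1 hz2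
    · have k0 := key ![0,0,0] ![0,0,1] (by decide) (by decide) (by decide)
      have k1 := key ![0,1,0] ![0,1,1] (by decide) (by decide) (by decide)
      have k2 := key ![1,1,0] ![1,1,1] (by decide) (by decide) (by decide)
      simp only [hg, Fin.prod_univ_three] at k0 k1 k2
      simp at k0 k1 k2
      exact alg (by linear_combination k0) (by linear_combination k1) (by linear_combination k2) hz1 hz2
private lemma exists_t {a b c d : ℂ} (had : a*d = b*c) (h : ¬(a = 0 ∧ b = 0)) :
    ∃ t, c = t*a ∧ d = t*b := by
  by_cases ha : a = 0
  · have hb : b ≠ 0 := fun hb => h ⟨ha, hb⟩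
    refine ⟨d/b, ?_, by field_simp⟩
    have hbc : b*c = 0 := by rw [← had, ha, zero_mul]
    rcases mul_eq_zero.mp hbc with h' | h'
    · exact absurd h' hb
    · rw [h', ha, mul_zero]
  · refine ⟨c/a, (div_mul_cancel₀ c ha).symm, ?_⟩
    rw [div_mul_eq_mul_div, eq_div_iff ha]
    linear_combination had

private lemma f_to_P {a b c d : ℂ} {f : (Fin 2 → ZMod 2) → ℂ}
    (h00 : f ![0, 0] = a) (h01 : f ![0, 1] = b)
    (h10 : f ![1, 0] = c) (h11 : f ![1, 1] = d)
    (hpt : IsProductType f) :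
    a*d = b*c ∨ (b = 0 ∧ c = 0) ∨ (a = 0 ∧ d = 0) := by
  obtain ⟨k, I, gg, hne, hdisj, hcov, hE, hprod⟩ := hpt
  have hall : ∀ v : Fin 2 → ZMod 2, v = ![0,0] ∨ v = ![0,1] ∨ v = ![1,0] ∨ v = ![1,1] := by
    decide
  rcases fin2_structure hdisj hcov with ⟨j, hj⟩ | ⟨j, hj⟩
  · obtain ⟨α, hα⟩ := support_of_univ_block hE hprod j hj
    rcases hall α with h | h | h | h <;> subst h
    · refine Or.inr (Or.inl ⟨?_, ?_⟩)
      · by_contra hb; exact absurd (hα ![0,1] (by rw [h01]; exact hb)) (by decide)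
      · by_contra hc; exact absurd (hα ![1,0] (by rw [h10]; exact hc)) (by decide)
    · refine Or.inr (Or.inr ⟨?_, ?_⟩)
      · by_contra ha; exact absurd (hα ![0,0] (by rw [h00]; exact ha)) (by decide)
      · by_contra hd; exact absurd (hα ![1,1] (by rw [h11]; exact hd)) (by decide)
    · refine Or.inr (Or.inr ⟨?_, ?_⟩)
      · by_contra ha; exact absurd (hα ![0,0] (by rw [h00]; exact ha)) (by decide)
      · by_contra hd; exact absurd (hα ![1,1] (by rw [h11]; exact hd)) (by decide)
    · refine Or.inr (Or.inl ⟨?_, ?_⟩)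
      · by_contra hb; exact absurd (hα ![0,1] (by rw [h01]; exact hb)) (by decide)
      · by_contra hc; exact absurd (hα ![1,0] (by rw [h10]; exact hc)) (by decide)
  · obtain ⟨u, R, hf, hR⟩ := slice_of_singleton hdisj hprod j 0 hj
    left
    have e10 : (![1,0] : Fin 2 → ZMod 2) = Function.update ![0,0] 0 1 := by decide
    have e11 : (![1,1] : Fin 2 → ZMod 2) = Function.update ![0,1] 0 1 := by decide
    have A : f ![0,0] = u 0 * R ![0,0] := by
      rw [hf, show (![0,0] : Fin 2 → ZMod 2) 0 = 0 from rfl]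
    have B : f ![0,1] = u 0 * R ![0,1] := by
      rw [hf, show (![0,1] : Fin 2 → ZMod 2) 0 = 0 from rfl]
    have C : f ![1,0] = u 1 * R ![0,0] := by
      rw [hf, show (![1,0] : Fin 2 → ZMod 2) 0 = 1 from rfl, e10, hR]
    have D : f ![1,1] = u 1 * R ![0,1] := by
      rw [hf, show (![1,1] : Fin 2 → ZMod 2) 0 = 1 from rfl, e11, hR]
    rw [← h00, ← h01, ← h10, ← h11, A, B, C, D]
    ring

private lemma P_to_f {a b c d : ℂ} {f : (Fin 2 → ZMod 2) → ℂ}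
    (h00 : f ![0, 0] = a) (h01 : f ![0, 1] = b)
    (h10 : f ![1, 0] = c) (h11 : f ![1, 1] = d)
    (hP : a*d = b*c ∨ (b = 0 ∧ c = 0) ∨ (a = 0 ∧ d = 0)) : IsProductType f := by
  have hall : ∀ v : Fin 2 → ZMod 2, v = ![0,0] ∨ v = ![0,1] ∨ v = ![1,0] ∨ v = ![1,1] := by
    decide
  rcases hP with had | ⟨hb, hc⟩ | ⟨ha, hd⟩
  · by_cases hab : a = 0 ∧ b = 0
    · apply prodType_of_units ![fun v => if v = 0 then 0 else 1, fun v => if v = 0 then c else d]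
      intro x
      rw [Fin.prod_univ_two]
      rcases hall x with h | h | h | h <;> subst h
      · rw [h00, hab.1]; norm_num
      · rw [h01, hab.2]; norm_num
      · rw [h10]; norm_num
      · rw [h11]; norm_num
    · obtain ⟨t, hct, hdt⟩ := exists_t had hab
      apply prodType_of_units ![fun v => if v = 0 then 1 else t, fun v => if v = 0 then a else b]
      intro x
      rw [Fin.prod_univ_two]
      rcases hall x with h | h | h | h <;> subst h
      · rw [h00]; norm_num
      · rw [h01]; norm_num
      · rw [h10, hct]; norm_num
      · rw [h11, hdt]; norm_num
  · apply prodType_of_InE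
    refine ⟨fun _ => 0, fun x hx => ?_⟩
    rcases hall x with h | h | h | h <;> subst h
    · left; decide
    · exact absurd (by rw [h01]; exact hb) hx
    · exact absurd (by rw [h10]; exact hc) hx
    · right; decide
  · apply prodType_of_InE
    refine ⟨![0,1], fun x hx => ?_⟩
    rcases hall x with h | h | h | h <;> subst h
    · exact absurd (by rw [h00]; exact ha) hx
    · left; rfl
    · right; decide
    · exact absurd (by rw [h11]; exact hd) hx

private lemma P_to_g {a b c d : ℂ} {g : (Fin 3 → ZMod 2) → ℂ}
    (hg : ∀ x, g x = (∏ i, if x i = 0 then a else b) +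
                     (∏ i, if x i = 0 then c else d))
    (hP : a*d = b*c ∨ (b = 0 ∧ c = 0) ∨ (a = 0 ∧ d = 0)) : IsProductType g := by
  rcases hP with had | ⟨hb, hc⟩ | ⟨ha, hd⟩
  · by_cases hab : a = 0 ∧ b = 0
    · apply prodType_of_units (fun _ => fun v => if v = 0 then c else d)
      intro x
      rw [hg]
      have hz : (∏ i, if x i = 0 then a else b) = 0 := by
        apply Finset.prod_eq_zero (Finset.mem_univ 0)
        rcases zmod2_cases (x 0) with h | h <;> rw [h] <;> simp [hab.1, hab.2]
      rw [hz, zero_add]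
    · obtain ⟨t, hct, hdt⟩ := exists_t had hab
      apply prodType_of_units (fun (j : Fin 3) (v : ZMod 2) =>
        (if j = 0 then 1 + t^3 else 1) * (if v = 0 then a else b))
      intro x
      have hall3 : ∀ v : Fin 3 → ZMod 2, v = ![0,0,0] ∨ v = ![0,0,1] ∨ v = ![0,1,0] ∨
          v = ![0,1,1] ∨ v = ![1,0,0] ∨ v = ![1,0,1] ∨ v = ![1,1,0] ∨ v = ![1,1,1] := by decide
      rcases hall3 x with h|h|h|h|h|h|h|h <;> subst h <;>
        norm_num [hg, Fin.prod_univ_three, hct, hdt, (by decide : ¬(2:Fin 3) = 0)] <;> split_ifs <;> ring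
  · apply prodType_of_InE
    refine ⟨fun _ => 0, fun x hx => ?_⟩
    by_contra hcon
    push_neg at hcon
    obtain ⟨hne0, hne1⟩ := hcon
    obtain ⟨i, hi⟩ := Function.ne_iff.mp hne0
    obtain ⟨i', hi'⟩ := Function.ne_iff.mp hne1
    have hxi : x i = 1 := (zmod2_cases (x i)).resolve_left hi
    have hxi' : x i' = 0 := by
      rcases zmod2_cases (x i') with h | h
      · exact h
      · exact absurd (by rw [h]; show (1 : ZMod 2) = 0 + 1; norm_num) hi'
    apply hx
    rw [hg]
    have p1 : (∏ i'', if x i'' = 0 then a else b) = 0 :=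
      Finset.prod_eq_zero (Finset.mem_univ i) (by rw [hxi]; simp [hb])
    have p2 : (∏ i'', if x i'' = 0 then c else d) = 0 :=
      Finset.prod_eq_zero (Finset.mem_univ i') (by rw [hxi']; simp [hc])
    rw [p1, p2, add_zero]
  · apply prodType_of_InE
    refine ⟨fun _ => 0, fun x hx => ?_⟩
    by_contra hcon
    push_neg at hcon
    obtain ⟨hne0, hne1⟩ := hcon
    obtain ⟨i, hi⟩ := Function.ne_iff.mp hne0
    obtain ⟨i', hi'⟩ := Function.ne_iff.mp hne1
    have hxi : x i = 1 := (zmod2_cases (x i)).resolve_left hi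
    have hxi' : x i' = 0 := by
      rcases zmod2_cases (x i') with h | h
      · exact h
      · exact absurd (by rw [h]; show (1 : ZMod 2) = 0 + 1; norm_num) hi'
    apply hx
    rw [hg]
    have p1 : (∏ i'', if x i'' = 0 then a else b) = 0 :=
      Finset.prod_eq_zero (Finset.mem_univ i') (by rw [hxi']; simp [ha])
    have p2 : (∏ i'', if x i'' = 0 then c else d) = 0 :=
      Finset.prod_eq_zero (Finset.mem_univ i) (by rw [hxi]; simp [hd])
    rw [p1, p2, add_zero]

theorem binary_product_iff_symmetrized_product (a b c d : ℂ)
    (f : (Fin 2 → ZMod 2) → ℂ)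
    (h00 : f ![0, 0] = a) (h01 : f ![0, 1] = b)
    (h10 : f ![1, 0] = c) (h11 : f ![1, 1] = d)
    (g : (Fin 3 → ZMod 2) → ℂ)
    (hg : ∀ x, g x = (∏ i, if x i = 0 then a else b) +
                     (∏ i, if x i = 0 then c else d)) :
    IsProductType f ↔ IsProductType g := by
  constructor
  · intro hf
    exact P_to_g hg (f_to_P h00 h01 h10 h11 hf)
  · intro hgp
    exact P_to_f h00 h01 h10 h11 (g_to_P hg hgp)
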